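/- In the $C_n$ path model: for $h$-paths of type $C_n$ (monotone north/east lattice paths from height $-n$ to height $n$ with an even number of east steps at height $0$), the generating function identity $\{\prod_{k=n}^{1}(1-z_{\bar{k}}x)^{-1}\}(1 - z_n z_{\bar{n}} x^2)^{-1}\{\prod_{k=n}^{1}(1-z_k x)^{-1}\}$ (taken in a commutative ring of the variables $z_1,\dots,z_n,z_{\bar n},\dots,z_{\bar 1}$) has $x^r$-coefficient equal to the sum over all such paths with exactly $r$ east steps of the product of their step labels, where an east step at height $y < 0$ is labeled $z_{n+1+y}$, at height $y > 0$ is labeled $z_{\overline{n+1-y}}$, and the east steps at height $0$ are labeled alternately $z_{\bar n}, z_n, z_{\bar n}, z_n, \dots$. -/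

import Mathlib

/-!
STATEMENT 12 (type `Cₙ` path model, commutative specialization):
the series `{∏_{k=n}^{1}(1-z_{k̄}x)^{-1}} (1-z_n z_{n̄} x²)^{-1}
{∏_{k=n}^{1}(1-z_k x)^{-1}}` has `x^r`-coefficient equal to the sum, over all
monotone north/east lattice paths from height `-n` to height `n` with evenly
many east steps at height `0` and exactly `r` east steps, of the products of
their step labels: an east step at height `y < 0` is labelled `z_{n+1+y}`,
at height `y > 0` it is labelled `z_{\overline{n+1-y}}`, and the east steps at
height `0` are labelled alternately `z_{n̄}, z_n, z_{n̄}, z_n, …`.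

A path (with fixed starting x-coordinate) is encoded by its word
`w : List Bool` (`true` = north, `false` = east) with `2n` north steps.
Variables: `Sum.inl m ↦ z_m`, `Sum.inr m ↦ z_{m̄}` (`1 ≤ m ≤ n`).
-/

open MvPolynomial

/-- Number of north steps strictly before position `p`. -/
def northsBefore (w : List Bool) (p : ℕ) : ℕ := (w.take p).count true

/-- Number of east steps at height `0` strictly before position `p`
(for a path starting at height `-n`). -/
def zeroEastsBefore (n : ℕ) (w : List Bool) (p : ℕ) : ℕ :=
  ((Finset.range p).filter fun q =>
    w.getD q true = false ∧ northsBefore w q = n).card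

/-- Total number of east steps at height `0`. -/
def zeroEasts (n : ℕ) (w : List Bool) : ℕ := zeroEastsBefore n w w.length

/-- The label of the east step at position `p` of the word `w`. -/
def stepVar (n : ℕ) (w : List Bool) (p : ℕ) : ℕ ⊕ ℕ :=
  let k := northsBefore w p
  if k < n then Sum.inl (k + 1)
  else if k = n then
    (if Even (zeroEastsBefore n w p) then Sum.inr n else Sum.inl n)
  else Sum.inr (2 * n + 1 - k)

/-- The weight of the path word `w`: the product of the labels of its east
steps. -/
noncomputable def wordWeight (n : ℕ) (w : List Bool) : MvPolynomial (ℕ ⊕ ℕ) ℤ :=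
  ∏ p ∈ Finset.range w.length,
    if w.getD p true = false then X (stepVar n w p) else 1

/-- The sum of the weights of all `h`-paths of type `Cₙ` with `r` east
steps: words of length `2n + r` with `2n` north steps and evenly many east
steps at height `0`. -/
noncomputable def cPathSum (n r : ℕ) : MvPolynomial (ℕ ⊕ ℕ) ℤ :=
  ∑ f : Fin (2 * n + r) → Bool,
    if (List.ofFn f).count true = 2 * n ∧ Even (zeroEasts n (List.ofFn f))
    then wordWeight n (List.ofFn f) else 0

-- list lemmas
lemma northsBefore_append (w : List Bool) (b : Bool) (p : ℕ) (h : p ≤ w.length) :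
    northsBefore (w ++ [b]) p = northsBefore w p := by
  unfold northsBefore
  rw [List.take_append_of_le_length h]

lemma getD_append' (w : List Bool) (b : Bool) (p : ℕ) (h : p < w.length) :
    (w ++ [b]).getD p true = w.getD p true := List.getD_append _ _ _ _ h

lemma zeroEastsBefore_append (n : ℕ) (w : List Bool) (b : Bool) (p : ℕ) (h : p ≤ w.length) :
    zeroEastsBefore n (w ++ [b]) p = zeroEastsBefore n w p := by
  unfold zeroEastsBefore
  congr 1
  apply Finset.filter_congr
  intro q hq
  rw [Finset.mem_range] at hq
  have hq' : q < w.length := lt_of_lt_of_le hq h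
  rw [getD_append' _ _ _ hq', northsBefore_append _ _ _ hq'.le]

lemma stepVar_append (n : ℕ) (w : List Bool) (b : Bool) (p : ℕ) (h : p < w.length) :
    stepVar n (w ++ [b]) p = stepVar n w p := by
  unfold stepVar
  rw [northsBefore_append _ _ _ h.le, zeroEastsBefore_append _ _ _ _ h.le]

lemma northsBefore_append_self (w : List Bool) (b : Bool) :
    northsBefore (w ++ [b]) w.length = w.count true := by
  unfold northsBefore
  rw [List.take_append_of_le_length le_rfl, List.take_length]

lemma getD_append_self (w : List Bool) (b : Bool) :
    (w ++ [b]).getD w.length true = b := by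
  rw [List.getD_append_right _ _ _ _ le_rfl, Nat.sub_self]
  rfl

lemma count_append' (w : List Bool) (b : Bool) :
    (w ++ [b]).count true = w.count true + (if b then 1 else 0) := by
  rw [List.count_append]
  cases b <;> simp

lemma zeroEasts_append (n : ℕ) (w : List Bool) (b : Bool) :
    zeroEasts n (w ++ [b]) =
      zeroEasts n w + (if b = false ∧ w.count true = n then 1 else 0) := by
  unfold zeroEasts
  have hl : (w ++ [b]).length = w.length + 1 := by simp
  rw [hl, zeroEastsBefore, Finset.range_add_one, Finset.filter_insert]
  by_cases hc : (w ++ [b]).getD w.length true = false ∧ northsBefore (w ++ [b]) w.length = n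
  · rw [if_pos hc, Finset.card_insert_of_notMem (by simp)]
    rw [getD_append_self, northsBefore_append_self] at hc
    rw [if_pos hc]
    congr 1
    exact (zeroEastsBefore_append n w b w.length le_rfl)
  · rw [if_neg hc]
    rw [getD_append_self, northsBefore_append_self] at hc
    rw [if_neg hc, add_zero]
    exact (zeroEastsBefore_append n w b w.length le_rfl)

lemma wordWeight_append (n : ℕ) (w : List Bool) (b : Bool) :
    wordWeight n (w ++ [b]) = wordWeight n w *
      (if b = false then X (stepVar n (w ++ [b]) w.length) else 1) := by
  unfold wordWeight
  have hl : (w ++ [b]).length = w.length + 1 := by simp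
  rw [hl, Finset.prod_range_succ, getD_append_self]
  congr 1
  apply Finset.prod_congr rfl
  intro p hp
  rw [Finset.mem_range] at hp
  rw [getD_append' _ _ _ hp, stepVar_append _ _ _ _ hp]

lemma stepVar_append_self (n : ℕ) (w : List Bool) (b : Bool) :
    stepVar n (w ++ [b]) w.length =
      if w.count true < n then Sum.inl (w.count true + 1)
      else if w.count true = n then
        (if Even (zeroEasts n w) then Sum.inr n else Sum.inl n)
      else Sum.inr (2 * n + 1 - w.count true) := by
  unfold stepVar
  rw [northsBefore_append_self, zeroEastsBefore_append _ _ _ _ le_rfl]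
  rfl

lemma ofFn_snoc {L : ℕ} (g : Fin L → Bool) (b : Bool) :
    List.ofFn (Fin.snoc g b) = List.ofFn g ++ [b] := by
  rw [List.ofFn_succ']
  simp [List.concat_eq_append]

lemma sum_split {M : Type*} [AddCommMonoid M] (L : ℕ) (φ : (Fin (L + 1) → Bool) → M) :
    ∑ f, φ f = ∑ g : Fin L → Bool, (φ (Fin.snoc g false) + φ (Fin.snoc g true)) := by
  rw [← Equiv.sum_comp (Fin.snocEquiv (fun _ => Bool)) φ, Fintype.sum_prod_type_right]
  apply Finset.sum_congr rfl
  intro g _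
  rw [Fintype.sum_bool, add_comm]
  rfl

noncomputable def ScL (n c m L : ℕ) : MvPolynomial (ℕ ⊕ ℕ) ℤ :=
  ∑ f : Fin L → Bool,
    if (List.ofFn f).count true = m ∧ zeroEasts n (List.ofFn f) % 2 = c
    then wordWeight n (List.ofFn f) else 0

lemma zeroEasts_of_count_lt {n : ℕ} {w : List Bool} (h : w.count true < n) :
    zeroEasts n w = 0 := by
  unfold zeroEasts zeroEastsBefore
  rw [Finset.card_eq_zero, Finset.filter_eq_empty_iff]
  rintro q - ⟨-, h2⟩
  have : northsBefore w q ≤ w.count true := List.Sublist.count_le true (List.take_sublist q w)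
  omega

lemma ScL_of_lt (n c m L : ℕ) (hm : m < n) (hc : c ≠ 0) : ScL n c m L = 0 := by
  apply Finset.sum_eq_zero
  intro f _
  rw [if_neg]
  rintro ⟨h1, h2⟩
  rw [zeroEasts_of_count_lt (by omega)] at h2
  omega

lemma ScL_diag (n c m : ℕ) : ScL n c m m = if c = 0 then 1 else 0 := by
  rw [ScL, Finset.sum_eq_single (fun _ => true)]
  · have hw : List.ofFn (fun _ : Fin m => true) = List.replicate m true :=
      List.ofFn_const m true
    rw [hw]
    have hz : zeroEasts n (List.replicate m true) = 0 := by
      unfold zeroEasts zeroEastsBefore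
      rw [Finset.card_eq_zero, Finset.filter_eq_empty_iff]
      rintro q hq ⟨h1, -⟩
      rw [Finset.mem_range, List.length_replicate] at hq
      rw [List.getD_eq_getElem _ _ (by simpa using hq)] at h1
      simp at h1
    have hcnt : (List.replicate m true).count true = m := by simp
    have hww : wordWeight n (List.replicate m true) = 1 := by
      apply Finset.prod_eq_one
      intro p hp
      rw [Finset.mem_range, List.length_replicate] at hp
      rw [List.getD_eq_getElem _ _ (by simpa using hp)]
      simp
    rw [hz, hcnt, hww]
    by_cases hc : c = 0
    · subst hc; simp
    · rw [if_neg hc, if_neg (by simp; omega)]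
  · intro f _ hf
    rw [if_neg]
    rintro ⟨h1, -⟩
    apply hf
    funext i
    have : ∀ x ∈ List.ofFn f, true = x :=
      List.count_eq_length.mp (by rw [h1, List.length_ofFn])
    exact (this (f i) (by rw [List.mem_ofFn]; exact ⟨i, rfl⟩)).symm
  · intro h
    exact absurd (Finset.mem_univ _) h

lemma count_append_false (w : List Bool) : (w ++ [false]).count true = w.count true := by
  rw [count_append']; simp

lemma count_append_true (w : List Bool) : (w ++ [true]).count true = w.count true + 1 := by
  rw [count_append']; simp

lemma zeroEasts_append_true (n : ℕ) (w : List Bool) :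
    zeroEasts n (w ++ [true]) = zeroEasts n w := by
  rw [zeroEasts_append]; simp

lemma zeroEasts_append_false (n : ℕ) (w : List Bool) :
    zeroEasts n (w ++ [false]) = zeroEasts n w + (if w.count true = n then 1 else 0) := by
  rw [zeroEasts_append]; simp

lemma wordWeight_append_true (n : ℕ) (w : List Bool) :
    wordWeight n (w ++ [true]) = wordWeight n w := by
  rw [wordWeight_append]; simp

lemma wordWeight_append_false (n : ℕ) (w : List Bool) :
    wordWeight n (w ++ [false]) = wordWeight n w * X (stepVar n (w ++ [false]) w.length) := by
  rw [wordWeight_append]; simp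

lemma east_term (n c m : ℕ) (hmn : m ≠ n) (w : List Bool) :
    (if ((w ++ [false]).count true = m ∧ zeroEasts n (w ++ [false]) % 2 = c)
      then wordWeight n (w ++ [false]) else 0)
    = X (if m < n then Sum.inl (m + 1) else Sum.inr (2 * n + 1 - m)) *
      (if (w.count true = m ∧ zeroEasts n w % 2 = c) then wordWeight n w else 0) := by
  rw [count_append_false, zeroEasts_append_false, wordWeight_append_false]
  by_cases h1 : w.count true = m
  · rw [if_neg (show ¬ w.count true = n from fun h => hmn (h1 ▸ h)), add_zero]
    by_cases h2 : zeroEasts n w % 2 = c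
    · have hA : w.count true = m ∧ zeroEasts n w % 2 = c := ⟨h1, h2⟩
      rw [if_pos hA, if_pos hA, stepVar_append_self,
        show (if w.count true < n then Sum.inl (w.count true + 1)
          else if w.count true = n then
            (if Even (zeroEasts n w) then Sum.inr n else Sum.inl n)
          else Sum.inr (2 * n + 1 - w.count true))
          = (if m < n then Sum.inl (m + 1) else Sum.inr (2 * n + 1 - m)) by
            rw [h1, if_neg hmn], mul_comm]
    · have hB : ¬(w.count true = m ∧ zeroEasts n w % 2 = c) := fun h => h2 h.2
      rw [if_neg hB, if_neg hB, mul_zero]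
  · have hB : ¬(w.count true = m ∧ zeroEasts n w % 2 = c) := fun h => h1 h.1
    have hB' : ¬(w.count true = m ∧
        (zeroEasts n w + if w.count true = n then 1 else 0) % 2 = c) := fun h => h1 h.1
    rw [if_neg hB, if_neg hB', mul_zero]

lemma east_term_mid (n c : ℕ) (hc : c ≤ 1) (w : List Bool) :
    (if ((w ++ [false]).count true = n ∧ zeroEasts n (w ++ [false]) % 2 = c)
      then wordWeight n (w ++ [false]) else 0)
    = X (if c = 0 then Sum.inl n else Sum.inr n) *
      (if (w.count true = n ∧ zeroEasts n w % 2 = 1 - c) then wordWeight n w else 0) := by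
  rw [count_append_false, zeroEasts_append_false, wordWeight_append_false]
  by_cases h1 : w.count true = n
  · rw [if_pos h1]
    by_cases h2 : zeroEasts n w % 2 = 1 - c
    · have hA : w.count true = n ∧ (zeroEasts n w + 1) % 2 = c := ⟨h1, by omega⟩
      have hB : w.count true = n ∧ zeroEasts n w % 2 = 1 - c := ⟨h1, h2⟩
      rw [if_pos hA, if_pos hB, stepVar_append_self,
        if_neg (show ¬ w.count true < n by omega), if_pos h1,
        show (if Even (zeroEasts n w) then Sum.inr n else Sum.inl n)
          = (if c = 0 then Sum.inl n else Sum.inr n) by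
            by_cases hc0 : c = 0
            · rw [if_pos hc0, if_neg (show ¬ Even (zeroEasts n w) by
                rw [Nat.even_iff]; omega)]
            · rw [if_neg hc0, if_pos (show Even (zeroEasts n w) by
                rw [Nat.even_iff]; omega)], mul_comm]
    · have hB : ¬(w.count true = n ∧ zeroEasts n w % 2 = 1 - c) := fun h => h2 h.2
      have hA : ¬(w.count true = n ∧ (zeroEasts n w + 1) % 2 = c) := by
        rintro ⟨-, h⟩; omega
      rw [if_neg hA, if_neg hB, mul_zero]
  · have hB : ¬(w.count true = n ∧ zeroEasts n w % 2 = 1 - c) := fun h => h1 h.1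
    have hA : ¬(w.count true = n ∧
        (zeroEasts n w + if w.count true = n then 1 else 0) % 2 = c) := fun h => h1 h.1
    rw [if_neg hA, if_neg hB, mul_zero]

lemma north_term (n c m : ℕ) (w : List Bool) :
    (if ((w ++ [true]).count true = m + 1 ∧ zeroEasts n (w ++ [true]) % 2 = c)
      then wordWeight n (w ++ [true]) else 0)
    = (if (w.count true = m ∧ zeroEasts n w % 2 = c) then wordWeight n w else 0) := by
  rw [count_append_true, zeroEasts_append_true, wordWeight_append_true]
  exact if_congr (and_congr_left' (by omega)) rfl rfl

lemma ScL_split (n c m L : ℕ) (hc : c ≤ 1) :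
    ScL n c m (L + 1) =
      (if m = n then X (if c = 0 then Sum.inl n else Sum.inr n) * ScL n (1 - c) m L
       else X (if m < n then Sum.inl (m + 1) else Sum.inr (2 * n + 1 - m)) * ScL n c m L) +
      (if m = 0 then 0 else ScL n c (m - 1) L) := by
  rw [ScL, sum_split, Finset.sum_add_distrib]
  congr 1
  · by_cases hmn : m = n
    · rw [if_pos hmn, ScL, Finset.mul_sum]
      apply Finset.sum_congr rfl
      intro g _
      rw [ofFn_snoc, hmn, east_term_mid n c hc]
    · rw [if_neg hmn, ScL, Finset.mul_sum]
      apply Finset.sum_congr rfl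
      intro g _
      rw [ofFn_snoc, east_term n c m hmn]
  · rcases m with - | m'
    · rw [if_pos rfl]
      apply Finset.sum_eq_zero
      intro g _
      rw [ofFn_snoc, if_neg]
      rintro ⟨h1, -⟩
      rw [count_append_true] at h1
      simp at h1
    · rw [if_neg (Nat.succ_ne_zero m'), ScL, Nat.add_sub_cancel]
      apply Finset.sum_congr rfl
      intro g _
      rw [ofFn_snoc, north_term n c m']

section PS
variable {R : Type*} [CommRing R]

lemma mk_mul_one_sub (a b : ℕ → R) (u : R) (h0 : a 0 = b 0)
    (hrec : ∀ r, a (r + 1) = u * a r + b (r + 1)) :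
    PowerSeries.mk a * (1 - PowerSeries.C (R := R) u * PowerSeries.X) = PowerSeries.mk b := by
  have key : PowerSeries.mk a * (PowerSeries.C (R := R) u * PowerSeries.X)
      = (PowerSeries.C (R := R) u * PowerSeries.mk a) * PowerSeries.X := by ring
  ext r
  rw [mul_sub, mul_one, map_sub, key]
  cases r with
  | zero =>
    simp [h0]
  | succ r =>
    rw [PowerSeries.coeff_succ_mul_X, PowerSeries.coeff_mk, PowerSeries.coeff_mk, hrec r,
      PowerSeries.coeff_C_mul, PowerSeries.coeff_mk]
    ring

lemma mk_mul_one_sub_sq (a b : ℕ → R) (u : R) (h0 : a 0 = b 0) (h1 : a 1 = b 1)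
    (hrec : ∀ r, a (r + 2) = u * a r + b (r + 2)) :
    PowerSeries.mk a * (1 - PowerSeries.C (R := R) u * PowerSeries.X ^ 2) = PowerSeries.mk b := by
  have key : PowerSeries.mk a * (PowerSeries.C (R := R) u * PowerSeries.X ^ 2)
      = (PowerSeries.C (R := R) u * PowerSeries.mk a) * PowerSeries.X ^ 2 := by ring
  ext r
  rw [mul_sub, mul_one, map_sub, key]
  match r with
  | 0 =>
    rw [PowerSeries.coeff_mul_X_pow', if_neg (by omega)]
    simp [h0]
  | 1 =>
    rw [PowerSeries.coeff_mul_X_pow', if_neg (by omega)]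
    simp [h1]
  | (r + 2) =>
    rw [show r + 2 = r + 2 from rfl, PowerSeries.coeff_mul_X_pow]
    rw [PowerSeries.coeff_mk, PowerSeries.coeff_mk, hrec r, PowerSeries.coeff_C_mul,
      PowerSeries.coeff_mk]
    ring

end PS

set_option maxHeartbeats 1000000 in
abbrev R2 := MvPolynomial (ℕ ⊕ ℕ) ℤ

lemma chainA (n m : ℕ) (v : ℕ ⊕ ℕ) (hmn : m + 1 ≠ n)
    (hv : (if m + 1 < n then Sum.inl (m + 1 + 1) else Sum.inr (2 * n + 1 - (m + 1))) = v) :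
    (PowerSeries.mk fun r => ScL n 0 (m + 1) ((m + 1) + r)) *
      (1 - PowerSeries.C (R := R2) (X v) * PowerSeries.X) =
    PowerSeries.mk fun r => ScL n 0 m (m + r) := by
  apply mk_mul_one_sub
  · show ScL n 0 (m + 1) ((m + 1) + 0) = ScL n 0 m (m + 0)
    rw [add_zero, add_zero, ScL_diag, ScL_diag]
  · intro r
    show ScL n 0 (m + 1) ((m + 1) + (r + 1))
      = X v * ScL n 0 (m + 1) ((m + 1) + r) + ScL n 0 m (m + (r + 1))
    have h := ScL_split n 0 (m + 1) ((m + 1) + r) (by omega)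
    rw [if_neg hmn, if_neg (Nat.succ_ne_zero m), Nat.add_sub_cancel, hv] at h
    rw [show (m + 1) + (r + 1) = ((m + 1) + r) + 1 from rfl, h,
      show (m + 1) + r = m + (r + 1) by omega]

lemma chain0 (n : ℕ) (hn : 1 ≤ n) :
    (PowerSeries.mk fun r => ScL n 0 0 (0 + r)) *
      (1 - PowerSeries.C (R := R2) (X (Sum.inl 1)) * PowerSeries.X) = 1 := by
  have h1 : (1 : PowerSeries R2) = PowerSeries.mk fun r => if r = 0 then 1 else 0 := by
    ext r
    rw [PowerSeries.coeff_mk, PowerSeries.coeff_one]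
  have h2 : (PowerSeries.mk fun r => ScL n 0 0 (0 + r)) *
      (1 - PowerSeries.C (R := R2) (X (Sum.inl 1)) * PowerSeries.X)
      = PowerSeries.mk fun r => if r = 0 then 1 else 0 := by
    apply mk_mul_one_sub
    · show ScL n 0 0 (0 + 0) = if (0 : ℕ) = 0 then 1 else 0
      rw [show (0 : ℕ) + 0 = 0 from rfl, ScL_diag]
    · intro r
      show ScL n 0 0 (0 + (r + 1))
        = X (Sum.inl 1) * ScL n 0 0 (0 + r) + if r + 1 = 0 then 1 else 0
      have h := ScL_split n 0 0 (0 + r) (by omega)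
      rw [if_neg (by omega : ¬(0 : ℕ) = n), if_pos rfl, add_zero,
        show (if 0 < n then Sum.inl (0 + 1) else Sum.inr (2 * n + 1 - 0)) = Sum.inl 1 by
          rw [if_pos (show 0 < n by omega)]] at h
      rw [show (0 : ℕ) + (r + 1) = (0 + r) + 1 from rfl, h, if_neg (Nat.succ_ne_zero r), add_zero]
  rw [h2, ← h1]

lemma chainB (n' : ℕ) :
    (PowerSeries.mk fun r => ScL (n' + 1) 0 (n' + 1) ((n' + 1) + r)) *
      (1 - PowerSeries.C (R := R2) (X (Sum.inl (n' + 1)) * X (Sum.inr (n' + 1))) *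
        PowerSeries.X ^ 2) =
    PowerSeries.mk fun r => ScL (n' + 1) 0 n' (n' + r) := by
  set n := n' + 1 with hn
  have hsub : ∀ L, ScL n 1 n (L + 1) = X (Sum.inr n) * ScL n 0 n L := by
    intro L
    have h := ScL_split n 1 n L (by omega)
    rw [if_pos rfl,
      show (if (1 : ℕ) = 0 then Sum.inl n else Sum.inr n) = Sum.inr n from
        if_neg one_ne_zero,
      show (1 : ℕ) - 1 = 0 from rfl,
      if_neg (by omega : ¬n = 0),
      ScL_of_lt n 1 (n - 1) L (by omega) one_ne_zero, add_zero] at h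
    exact h
  apply mk_mul_one_sub_sq
  · show ScL n 0 n (n + 0) = ScL n 0 n' (n' + 0)
    rw [add_zero, add_zero, ScL_diag, ScL_diag]
  · show ScL n 0 n (n + 1) = ScL n 0 n' (n' + 1)
    have h := ScL_split n 0 n n (by omega)
    rw [if_pos rfl,
      show (if (0 : ℕ) = 0 then Sum.inl n else Sum.inr n) = Sum.inl n from if_pos rfl,
      show (1 : ℕ) - 0 = 1 from rfl,
      if_neg (by omega : ¬n = 0),
      ScL_diag, if_neg one_ne_zero, mul_zero, zero_add,
      show n - 1 = n' by omega] at h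
    exact h
  · intro r
    show ScL n 0 n (n + (r + 2))
      = X (Sum.inl n) * X (Sum.inr n) * ScL n 0 n (n + r) + ScL n 0 n' (n' + (r + 2))
    have h := ScL_split n 0 n (n + (r + 1)) (by omega)
    rw [if_pos rfl,
      show (if (0 : ℕ) = 0 then Sum.inl n else Sum.inr n) = Sum.inl n from if_pos rfl,
      show (1 : ℕ) - 0 = 1 from rfl,
      if_neg (by omega : ¬n = 0),
      show n - 1 = n' by omega,
      show n + (r + 1) = (n + r) + 1 from rfl,
      hsub (n + r)] at h
    rw [show n + (r + 2) = (n + (r + 1)) + 1 from rfl,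
      show n + (r + 1) = (n + r) + 1 from rfl, h,
      show n' + (r + 2) = (n + r) + 1 by omega]
    ring

theorem cPath_generating_function (n : ℕ) (hn : 1 ≤ n) :
    (PowerSeries.mk fun r => cPathSum n r) *
      ((∏ k ∈ Finset.range n,
          (1 - PowerSeries.C (R := MvPolynomial (ℕ ⊕ ℕ) ℤ) (X (Sum.inr (k + 1))) *
            PowerSeries.X)) *
        (1 - PowerSeries.C (R := MvPolynomial (ℕ ⊕ ℕ) ℤ)
            (X (Sum.inl n) * X (Sum.inr n)) * PowerSeries.X ^ 2) *
        ∏ k ∈ Finset.range n,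
          (1 - PowerSeries.C (R := MvPolynomial (ℕ ⊕ ℕ) ℤ) (X (Sum.inl (k + 1))) *
            PowerSeries.X)) = 1 := by
  obtain ⟨n', rfl⟩ : ∃ n', n = n' + 1 := ⟨n - 1, by omega⟩
  set n := n' + 1 with hdefn
  have key1 : (PowerSeries.mk fun r => cPathSum n r)
      = PowerSeries.mk fun r => ScL n 0 (2 * n) (2 * n + r) := by
    congr 1
    funext r
    unfold cPathSum ScL
    apply Finset.sum_congr rfl
    intro f _
    exact if_congr (and_congr_right fun _ => Nat.even_iff) rfl rfl
  have chain1 : ∀ j, j ≤ n →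
      (PowerSeries.mk fun r => ScL n 0 (2 * n) (2 * n + r)) *
        ∏ k ∈ Finset.range j,
          (1 - PowerSeries.C (R := R2) (X (Sum.inr (k + 1))) * PowerSeries.X)
      = PowerSeries.mk fun r => ScL n 0 (2 * n - j) ((2 * n - j) + r) := by
    intro j
    induction j with
    | zero => intro _; simp
    | succ j ih =>
      intro hj
      rw [Finset.prod_range_succ, ← mul_assoc, ih (by omega),
        show 2 * n - j = (2 * n - (j + 1)) + 1 by omega]
      exact chainA n (2 * n - (j + 1)) (Sum.inr (j + 1)) (by omega)
        (by rw [if_neg (by omega)]; congr 1; omega)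
  have chain3 : ∀ j, j ≤ n' →
      (PowerSeries.mk fun r => ScL n 0 n' (n' + r)) *
        ∏ k ∈ Finset.range j,
          (1 - PowerSeries.C (R := R2) (X (Sum.inl (n - k))) * PowerSeries.X)
      = PowerSeries.mk fun r => ScL n 0 (n' - j) ((n' - j) + r) := by
    intro j
    induction j with
    | zero => intro _; simp
    | succ j ih =>
      intro hj
      rw [Finset.prod_range_succ, ← mul_assoc, ih (by omega),
        show n' - j = (n' - (j + 1)) + 1 by omega]
      exact chainA n (n' - (j + 1)) (Sum.inl (n - j)) (by omega)
        (by rw [if_pos (by omega)]; congr 1; omega)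
  have hrefl : (∏ k ∈ Finset.range n,
        (1 - PowerSeries.C (R := R2) (X (Sum.inl (n - k))) * PowerSeries.X))
      = ∏ k ∈ Finset.range n,
        (1 - PowerSeries.C (R := R2) (X (Sum.inl (k + 1))) * PowerSeries.X) := by
    rw [← Finset.prod_range_reflect
      (fun k => 1 - PowerSeries.C (R := R2) (X (Sum.inl (k + 1))) * PowerSeries.X) n]
    apply Finset.prod_congr rfl
    intro k hk
    rw [Finset.mem_range] at hk
    rw [show n - k = n - 1 - k + 1 by omega]
  have step1 := chain1 n le_rfl
  rw [show 2 * n - n = n by omega] at step1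
  have step3 := chain3 n' le_rfl
  rw [show n' - n' = 0 by omega] at step3
  rw [key1, ← mul_assoc, ← mul_assoc, step1, chainB n', ← hrefl,
    show n' + 1 = n from rfl, Finset.prod_range_succ, ← mul_assoc, step3,
    show n - n' = 1 by omega]
  exact chain0 n (by omega)
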